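/- arXiv:2505.15175 — 2 statements merged into one kernel-verified Lean document; each statement's English description precedes it below -/
import Mathlib

section
/- Fix 0 < c < 1, θ ∈ [0,1] and V ≥ 0, set τ² = V²·(θ/2)·(1 − θ/2), and for λ > 0 let σ²(λ) = (m̃(−λ) − λ·m̃′(−λ))·[(1 − θ²) + ((1 + c⁻¹τ²)/(1 + c⁻¹τ²·(1 − λ·m̃(−λ)))² − 1)·θ(1−θ)²/(2−θ)]. Then as λ → 0⁺, σ²(λ) → (c/(1−c))·[(1 − θ²) + ((1 + c⁻¹τ²)/(1 + τ²)² − 1)·θ(1−θ)²/(2−θ)]. -/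
open Filter Topology

/-- Marčenko–Pastur Stieltjes transform (for real `z < 0`). -/
noncomputable def mMP (c z : ℝ) : ℝ :=
  (1 - c - z - Real.sqrt ((1 - c - z) ^ 2 - 4 * c * z)) / (2 * c * z)

/-- Companion (Gram-side) Stieltjes transform. -/
noncomputable def mTildeMP (c z : ℝ) : ℝ := c * mMP c z - (1 - c) / z

lemma hasDeriv_mTilde (c z : ℝ) (hc : 0 < c) (hz : z < 0) :
    HasDerivAt (mTildeMP c)
      (c * (((-1 - (-2 * (1 - c - z) - 4 * c) / (2 * Real.sqrt ((1 - c - z) ^ 2 - 4 * c * z))) * (2 * c * z)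
            - (1 - c - z - Real.sqrt ((1 - c - z) ^ 2 - 4 * c * z)) * (2 * c)) / (2 * c * z) ^ 2)
        - (0 * z - (1 - c) * 1) / z ^ 2) z := by
  have hq : (1 - c - z) ^ 2 - 4 * c * z ≠ 0 := by nlinarith [sq_nonneg (1 - c - z)]
  have hqd : HasDerivAt (fun z : ℝ => (1 - c - z) ^ 2 - 4 * c * z)
      (-2 * (1 - c - z) - 4 * c) z := by
    have h1 : HasDerivAt (fun z : ℝ => (1 - c - z) ^ 2) (2 * (1 - c - z) ^ 1 * (-1)) z :=
      ((hasDerivAt_id z).const_sub (1 - c)).pow 2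
    have h2 : HasDerivAt (fun z : ℝ => 4 * c * z) (4 * c) z := by
      simpa using (hasDerivAt_id z).const_mul (4 * c)
    exact (h1.sub h2).congr_deriv (by ring)
  have hsq := hqd.sqrt hq
  have hu : HasDerivAt (fun z : ℝ => 1 - c - z - Real.sqrt ((1 - c - z) ^ 2 - 4 * c * z))
      (-1 - (-2 * (1 - c - z) - 4 * c) / (2 * Real.sqrt ((1 - c - z) ^ 2 - 4 * c * z))) z := by
    have h1 : HasDerivAt (fun z : ℝ => 1 - c - z) (-1) z := by
      simpa using (hasDerivAt_id z).const_sub (1 - c)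
    exact h1.sub hsq
  have hv : HasDerivAt (fun z : ℝ => 2 * c * z) (2 * c) z := by
    simpa using (hasDerivAt_id z).const_mul (2 * c)
  have hvne : 2 * c * z ≠ 0 := by nlinarith
  have hm : HasDerivAt (mMP c)
      (((-1 - (-2 * (1 - c - z) - 4 * c) / (2 * Real.sqrt ((1 - c - z) ^ 2 - 4 * c * z))) * (2 * c * z)
        - (1 - c - z - Real.sqrt ((1 - c - z) ^ 2 - 4 * c * z)) * (2 * c)) / (2 * c * z) ^ 2) z :=
    hu.div hv hvne
  have hconst : HasDerivAt (fun z : ℝ => (1 - c) / z) ((0 * z - (1 - c) * 1) / z ^ 2) z :=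
    (hasDerivAt_const z (1 - c)).div (hasDerivAt_id z) hz.ne
  exact (hm.const_mul c).sub hconst

lemma key1 (c lam : ℝ) (hc0 : 0 < c) (hlam : 0 < lam) :
    mTildeMP c (-lam) - lam * deriv (mTildeMP c) (-lam)
      = (-1 + (1 + c + lam) / Real.sqrt ((1 - c + lam) ^ 2 + 4 * c * lam)) / 2 := by
  have harg : (1 - c - (-lam)) ^ 2 - 4 * c * (-lam) = (1 - c + lam) ^ 2 + 4 * c * lam := by ring
  rw [(hasDeriv_mTilde c (-lam) hc0 (by linarith)).deriv]
  simp only [mTildeMP, mMP, harg]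
  obtain ⟨s, hsdef⟩ : ∃ s, Real.sqrt ((1 - c + lam) ^ 2 + 4 * c * lam) = s := ⟨_, rfl⟩
  have hs0 : 0 < s := by rw [← hsdef]; apply Real.sqrt_pos.mpr; nlinarith
  rw [hsdef]
  have h1 : (1 : ℝ) - c - (-lam) = 1 - c + lam := by ring
  rw [h1]
  field_simp
  ring

lemma key2 (c lam : ℝ) (hc0 : 0 < c) (hlam : 0 < lam) :
    1 - lam * mTildeMP c (-lam)
      = (1 + c + lam - Real.sqrt ((1 - c + lam) ^ 2 + 4 * c * lam)) / 2 := by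
  have harg : (1 - c - (-lam)) ^ 2 - 4 * c * (-lam) = (1 - c + lam) ^ 2 + 4 * c * lam := by ring
  simp only [mTildeMP, mMP, harg]
  obtain ⟨s, hsdef⟩ : ∃ s, Real.sqrt ((1 - c + lam) ^ 2 + 4 * c * lam) = s := ⟨_, rfl⟩
  rw [hsdef]
  have h1 : (1 : ℝ) - c - (-lam) = 1 - c + lam := by ring
  rw [h1]
  field_simp
  ring

/-- the ridgeless limit of the variance `σ²(λ)`:
with `τ² = V²(θ/2)(1 − θ/2)`, as `λ → 0⁺`,
`σ²(λ) → (c/(1−c))[(1 − θ²) + ((1 + c⁻¹τ²)/(1 + τ²)² − 1)·θ(1−θ)²/(2−θ)]`. -/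
theorem sigma_ridgeless_limit (c θ V : ℝ) (hc0 : 0 < c) (hc1 : c < 1)
    (hθ : θ ∈ Set.Icc (0 : ℝ) 1) (hV : 0 ≤ V) :
    let τsq : ℝ := V ^ 2 * (θ / 2) * (1 - θ / 2)
    Tendsto (fun lam : ℝ =>
        (mTildeMP c (-lam) - lam * deriv (mTildeMP c) (-lam)) *
          ((1 - θ ^ 2) +
            ((1 + c⁻¹ * τsq) / (1 + c⁻¹ * τsq * (1 - lam * mTildeMP c (-lam))) ^ 2 - 1) *
              (θ * (1 - θ) ^ 2 / (2 - θ))))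
      (𝓝[>] 0)
      (𝓝 ((c / (1 - c)) *
        ((1 - θ ^ 2) +
          ((1 + c⁻¹ * τsq) / (1 + τsq) ^ 2 - 1) * (θ * (1 - θ) ^ 2 / (2 - θ))))) := by
  intro τsq
  have hθ0 := hθ.1
  have hθ1 := hθ.2
  have hτ : 0 ≤ τsq := by
    show (0:ℝ) ≤ V ^ 2 * (θ / 2) * (1 - θ / 2)
    exact mul_nonneg (mul_nonneg (sq_nonneg V) (by linarith)) (by linarith)
  have hcτ : 0 ≤ c⁻¹ * τsq := mul_nonneg (by positivity) hτ
  set Φ : ℝ → ℝ := fun lam =>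
    ((-1 + (1 + c + lam) / Real.sqrt ((1 - c + lam) ^ 2 + 4 * c * lam)) / 2) *
      ((1 - θ ^ 2) +
        ((1 + c⁻¹ * τsq) /
          (1 + c⁻¹ * τsq * ((1 + c + lam - Real.sqrt ((1 - c + lam) ^ 2 + 4 * c * lam)) / 2)) ^ 2
          - 1) * (θ * (1 - θ) ^ 2 / (2 - θ))) with hΦdef
  have heq : (fun lam : ℝ =>
      (mTildeMP c (-lam) - lam * deriv (mTildeMP c) (-lam)) *
        ((1 - θ ^ 2) +
          ((1 + c⁻¹ * τsq) / (1 + c⁻¹ * τsq * (1 - lam * mTildeMP c (-lam))) ^ 2 - 1) *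
            (θ * (1 - θ) ^ 2 / (2 - θ)))) =ᶠ[𝓝[>] (0:ℝ)] Φ := by
    filter_upwards [self_mem_nhdsWithin] with lam (hlam : 0 < lam)
    rw [key1 c lam hc0 hlam, key2 c lam hc0 hlam]
  -- continuity facts
  have hsqrt : ContinuousAt (fun lam : ℝ => Real.sqrt ((1 - c + lam) ^ 2 + 4 * c * lam)) 0 := by
    apply Real.continuous_sqrt.continuousAt.comp
    fun_prop
  have hval : Real.sqrt ((1 - c + (0:ℝ)) ^ 2 + 4 * c * 0) = 1 - c := by
    rw [show (1 - c + (0:ℝ)) ^ 2 + 4 * c * 0 = (1 - c) ^ 2 by ring]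
    exact Real.sqrt_sq (by linarith)
  have h1c : (1:ℝ) - c ≠ 0 := by linarith
  have hden2 : (1 + c⁻¹ * τsq * ((1 + c + (0:ℝ) - Real.sqrt ((1 - c + (0:ℝ)) ^ 2 + 4 * c * 0)) / 2)) ≠ 0 := by
    rw [hval]
    have : c⁻¹ * τsq * ((1 + c + 0 - (1 - c)) / 2) = τsq := by
      field_simp
      ring
    rw [this]; linarith
  have hcontΦ : ContinuousAt Φ 0 := by
    rw [hΦdef]
    apply ContinuousAt.mul
    · apply ContinuousAt.div_const
      apply ContinuousAt.add continuousAt_const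
      exact ContinuousAt.div (by fun_prop) hsqrt (by rw [hval]; exact h1c)
    · apply ContinuousAt.add continuousAt_const
      apply ContinuousAt.mul _ continuousAt_const
      apply ContinuousAt.sub _ continuousAt_const
      apply ContinuousAt.div continuousAt_const
      · apply ContinuousAt.pow
        apply ContinuousAt.add continuousAt_const
        apply ContinuousAt.mul continuousAt_const
        apply ContinuousAt.div_const
        exact (ContinuousAt.sub (by fun_prop) hsqrt)
      · exact pow_ne_zero 2 hden2
  have hΦ0 : Φ 0 = (c / (1 - c)) *
      ((1 - θ ^ 2) +
        ((1 + c⁻¹ * τsq) / (1 + τsq) ^ 2 - 1) * (θ * (1 - θ) ^ 2 / (2 - θ))) := by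
    rw [hΦdef]
    simp only
    rw [hval]
    have e1 : (-1 + (1 + c + 0) / (1 - c)) / 2 = c / (1 - c) := by
      field_simp; ring
    have e2 : c⁻¹ * τsq * ((1 + c + 0 - (1 - c)) / 2) = τsq := by
      field_simp
      ring
    rw [e1, e2]
  have := (hcontΦ.continuousWithinAt (s := Set.Ioi (0:ℝ))).tendsto
  rw [hΦ0] at this
  exact Tendsto.congr' heq.symm this
end

section
/- In the label-and-indicator model with θ ∈ (0,1), as n → ∞ one has, almost surely: (1/n)·‖w̃‖² → 1 − θ², and (1/n)·(w̃ᵀr)²/‖r‖² → θ(1−θ)²/(2−θ) (with ‖r‖ > 0 for all sufficiently large n almost surely). -/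
open MeasureTheory ProbabilityTheory Filter Topology

section Helpers

variable {Ω : Type} [MeasureSpace Ω] [IsProbabilityMeasure (ℙ : Measure Ω)]

lemma myintegrable {f : Ω → ℝ} (hf : Measurable f) {C : ℝ} (h : ∀ ω, |f ω| ≤ C) :
    Integrable f ℙ :=
  (integrable_const C).mono' hf.aestronglyMeasurable (ae_of_all _ (by simpa using h))

lemma myintegral_prod {n : ℕ} (Z : Fin n → Ω → ℝ) (hm : ∀ i, Measurable (Z i))
    {C : ℝ} (hC : 0 ≤ C) (hb : ∀ i ω, |Z i ω| ≤ C)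
    (hind : iIndepFun Z ℙ) (s : Finset (Fin n)) :
    ∫ ω, ∏ j ∈ s, Z j ω ∂ℙ = ∏ j ∈ s, ∫ ω, Z j ω ∂ℙ := by
  classical
  induction s using Finset.induction with
  | empty => simp
  | @insert i s hi ih =>
    have hprod_meas : Measurable fun ω => ∏ j ∈ s, Z j ω := by
      exact Finset.measurable_prod _ fun j _ => hm j
    have hprod_bdd : ∀ ω, |∏ j ∈ s, Z j ω| ≤ C ^ s.card := by
      intro ω
      rw [Finset.abs_prod]
      calc ∏ j ∈ s, |Z j ω| ≤ ∏ _j ∈ s, C :=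
            Finset.prod_le_prod (fun j _ => abs_nonneg _) (fun j _ => hb j ω)
        _ = C ^ s.card := by rw [Finset.prod_const]
    have hIndep : IndepFun (fun ω => ∏ j ∈ s, Z j ω) (Z i) ℙ := by
      have h := hind.indepFun_finset_prod_of_notMem hm hi
      have : (∏ j ∈ s, Z j) = fun ω => ∏ j ∈ s, Z j ω := by
        funext ω; simp [Finset.prod_apply]
      rwa [this] at h
    have h1 : Integrable (fun ω => ∏ j ∈ s, Z j ω) ℙ := myintegrable hprod_meas hprod_bdd
    have h2 : Integrable (Z i) ℙ := myintegrable (hm i) (hb i)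
    calc ∫ ω, ∏ j ∈ insert i s, Z j ω ∂ℙ
        = ∫ ω, (∏ j ∈ s, Z j ω) * Z i ω ∂ℙ := by
          simp_rw [Finset.prod_insert hi, mul_comm]
      _ = (∫ ω, ∏ j ∈ s, Z j ω ∂ℙ) * ∫ ω, Z i ω ∂ℙ :=
          hIndep.integral_fun_mul_eq_mul_integral h1.aestronglyMeasurable h2.aestronglyMeasurable
      _ = ∏ j ∈ insert i s, ∫ ω, Z j ω ∂ℙ := by
          rw [ih, Finset.prod_insert hi, mul_comm]

lemma fourth_moment {n : ℕ} (Z : Fin n → Ω → ℝ) (hm : ∀ i, Measurable (Z i))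
    {C : ℝ} (hC : 0 ≤ C) (hb : ∀ i ω, |Z i ω| ≤ C)
    (hind : iIndepFun Z ℙ)
    (hmean : ∀ i, ∫ ω, Z i ω ∂ℙ = 0) :
    ∫ ω, (∑ i, Z i ω) ^ 4 ∂ℙ ≤ 16 * C ^ 4 * n ^ 2 := by
  classical
  set D : ℝ := max C 1 with hD
  have hD1 : (1:ℝ) ≤ D := le_max_right _ _
  have hCD : C ≤ D := le_max_left _ _
  have hD0 : (0:ℝ) ≤ D := le_trans zero_le_one hD1
  -- fiber counts
  set m : (Fin 4 → Fin n) → Fin n → ℕ := fun g j => (Finset.univ.filter (fun t => g t = j)).card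
    with hm_def
  -- the term functions
  set P : (Fin 4 → Fin n) → Ω → ℝ := fun g ω => ∏ t, Z (g t) ω with hP
  have hPmeas : ∀ g, Measurable (P g) := fun g => Finset.measurable_prod _ fun t _ => hm (g t)
  have hPbdd : ∀ g ω, |P g ω| ≤ C ^ 4 := by
    intro g ω
    rw [hP]
    simp only
    rw [Finset.abs_prod]
    calc (∏ t, |Z (g t) ω|) ≤ ∏ _t : Fin 4, C :=
          Finset.prod_le_prod (fun t _ => abs_nonneg _) (fun t _ => hb (g t) ω)
      _ = C ^ 4 := by simp [Finset.prod_const]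
  have hPint : ∀ g, Integrable (P g) ℙ := fun g => myintegrable (hPmeas g) (hPbdd g)
  -- expansion
  have hexp : (fun ω => (∑ i, Z i ω) ^ 4) = fun ω => ∑ g : Fin 4 → Fin n, P g ω := by
    funext ω; exact Fintype.sum_pow (fun i => Z i ω) 4
  -- value of each term
  have hterm : ∀ g : Fin 4 → Fin n,
      ∫ ω, P g ω ∂ℙ = ∏ j ∈ Finset.univ.image g, ∫ ω, Z j ω ^ m g j ∂ℙ := by
    intro g
    set W : Fin n → Ω → ℝ := fun j ω => Z j ω ^ m g j with hW
    have hWmeas : ∀ j, Measurable (W j) := fun j => (hm j).pow_const _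
    have hWbdd : ∀ j ω, |W j ω| ≤ D ^ 4 := by
      intro j ω
      rw [hW]; simp only
      rw [abs_pow]
      have h1 : |Z j ω| ^ m g j ≤ D ^ m g j :=
        pow_le_pow_left₀ (abs_nonneg _) (le_trans (hb j ω) hCD) _
      have h2 : m g j ≤ 4 := by
        rw [hm_def]
        simpa using Finset.card_filter_le Finset.univ (fun t => g t = j)
      exact le_trans h1 (pow_le_pow_right₀ hD1 h2)
    have hWind : iIndepFun W ℙ :=
      hind.comp (fun j x => x ^ m g j) (fun j => measurable_id.pow_const _)
    have hpt : ∀ ω, P g ω = ∏ j ∈ Finset.univ.image g, W j ω := by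
      intro ω
      rw [hP]; simp only
      exact Finset.prod_comp (fun j => Z j ω) g
    calc ∫ ω, P g ω ∂ℙ = ∫ ω, ∏ j ∈ Finset.univ.image g, W j ω ∂ℙ := by
          congr 1; funext ω; exact hpt ω
      _ = ∏ j ∈ Finset.univ.image g, ∫ ω, W j ω ∂ℙ :=
          myintegral_prod W hWmeas (pow_nonneg hD0 4) hWbdd hWind _
  -- the bad set
  set B : Finset (Fin 4 → Fin n) :=
    Finset.univ.filter (fun g => ∀ j ∈ Finset.univ.image g, 2 ≤ m g j) with hB
  have hzero : ∀ g ∉ B, ∫ ω, P g ω ∂ℙ = 0 := by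
    intro g hg
    rw [hB] at hg
    simp only [Finset.mem_filter, Finset.mem_univ, true_and, not_forall] at hg
    obtain ⟨j, hj, hj2⟩ := hg
    have hfib : 1 ≤ m g j := by
      rw [Finset.mem_image] at hj
      obtain ⟨t, _, ht⟩ := hj
      rw [hm_def]
      exact Finset.card_pos.mpr ⟨t, by simp [ht]⟩
    have hm1 : m g j = 1 := by omega
    rw [hterm g]
    apply Finset.prod_eq_zero hj
    rw [hm1]
    simpa using hmean j
  have hcard : B.card ≤ 16 * n ^ 2 := by
    rcases Nat.eq_zero_or_pos n with hn | hn
    · subst hn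
      have : B = ∅ := Finset.eq_empty_of_forall_notMem (fun g _ => (g 0).elim0)
      simp [this]
    · set Φ : (Fin n × Fin n) × (Fin 4 → Bool) → (Fin 4 → Fin n) :=
        fun p t => if p.2 t then p.1.1 else p.1.2 with hΦ
      have hsub : B ⊆ Finset.univ.image Φ := by
        intro g hg
        rw [hB] at hg
        simp only [Finset.mem_filter, Finset.mem_univ, true_and] at hg
        -- card of image ≤ 2
        have hsum : (Finset.univ.image g).card * 2 ≤ 4 := by
          have h4 : ∑ j ∈ Finset.univ.image g, m g j = 4 := by
            rw [hm_def]
            have := Finset.card_eq_sum_card_image g (Finset.univ : Finset (Fin 4))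
            simpa using this.symm
          calc (Finset.univ.image g).card * 2 = ∑ _j ∈ Finset.univ.image g, 2 := by
                rw [Finset.sum_const, smul_eq_mul, mul_comm]
            _ ≤ ∑ j ∈ Finset.univ.image g, m g j := Finset.sum_le_sum hg
            _ = 4 := h4
        have hne : (Finset.univ.image g).Nonempty := ⟨g 0, Finset.mem_image_of_mem g (by simp)⟩
        obtain ⟨a, ha⟩ := hne
        have hsub2 : ∃ b, Finset.univ.image g ⊆ {a, b} := by
          rcases Finset.eq_empty_or_nonempty ((Finset.univ.image g).erase a) with he | ⟨b, hb⟩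
          · exact ⟨a, by
              intro x hx
              rcases eq_or_ne x a with h | h
              · simp [h]
              · exact absurd (Finset.mem_erase.mpr ⟨h, hx⟩) (by simp [he])⟩
          · refine ⟨b, ?_⟩
            intro x hx
            rcases eq_or_ne x a with h | h
            · simp [h]
            · have hx' : x ∈ (Finset.univ.image g).erase a := Finset.mem_erase.mpr ⟨h, hx⟩
              have hcard1 : ((Finset.univ.image g).erase a).card ≤ 1 := by
                have := Finset.card_erase_of_mem ha
                omega
              exact Finset.mem_insert.mpr (Or.inr (Finset.mem_singleton.mpr (Finset.card_le_one.mp hcard1 x hx' b hb)))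
        obtain ⟨b, hab⟩ := hsub2
        rw [Finset.mem_image]
        refine ⟨⟨⟨a, b⟩, fun t => decide (g t = a)⟩, Finset.mem_univ _, ?_⟩
        funext t
        rw [hΦ]
        simp only
        by_cases h : g t = a
        · simp [h]
        · have hmem : g t ∈ ({a, b} : Finset (Fin n)) := hab (Finset.mem_image_of_mem g (by simp))
          simp only [Finset.mem_insert, Finset.mem_singleton] at hmem
          have hgb : g t = b := hmem.resolve_left h
          rw [if_neg (by simpa using h)]
          exact hgb.symm
      calc B.card ≤ (Finset.univ.image Φ).card := Finset.card_le_card hsub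
        _ ≤ 16 * n ^ 2 := by
            have h1 := Finset.card_image_le (f := Φ) (s := Finset.univ)
            simp only [Finset.card_univ] at h1
            have h2 : Fintype.card ((Fin n × Fin n) × (Fin 4 → Bool)) = 16 * n ^ 2 := by
              simp [Fintype.card_fun]; ring
            omega
  -- put together
  rw [hexp, integral_finset_sum _ (fun g _ => hPint g)]
  rw [← Finset.sum_filter_add_sum_filter_not Finset.univ (· ∈ B)]
  have h2 : ∑ g ∈ Finset.univ.filter (¬ · ∈ B), ∫ ω, P g ω ∂ℙ = 0 :=
    Finset.sum_eq_zero fun g hg => hzero g (by simpa using (Finset.mem_filter.mp hg).2)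
  rw [h2, add_zero]
  have h3 : ∀ g ∈ Finset.univ.filter (· ∈ B), ∫ ω, P g ω ∂ℙ ≤ C ^ 4 := by
    intro g _
    calc ∫ ω, P g ω ∂ℙ ≤ ∫ _ω, C ^ 4 ∂ℙ :=
          integral_mono (hPint g) (integrable_const _)
            (fun ω => le_trans (le_abs_self _) (hPbdd g ω))
      _ = C ^ 4 := by simp
  calc ∑ g ∈ Finset.univ.filter (· ∈ B), ∫ ω, P g ω ∂ℙ
      ≤ (Finset.univ.filter (· ∈ B)).card • C ^ 4 := Finset.sum_le_card_nsmul _ _ _ h3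
    _ ≤ (16 * n ^ 2) • C ^ 4 := by
        apply nsmul_le_nsmul_left (pow_nonneg hC 4)
        calc (Finset.univ.filter (· ∈ B)).card = B.card := by
              congr 1; ext g; simp
          _ ≤ 16 * n ^ 2 := hcard
    _ = 16 * C ^ 4 * n ^ 2 := by
        rw [nsmul_eq_mul]; push_cast; ring

lemma tri_lln (X : (n : ℕ) → Fin n → Ω → ℝ) (μ C : ℝ) (hC : 0 ≤ C)
    (hmeas : ∀ n i, Measurable (X n i))
    (hb : ∀ n i ω, |X n i ω| ≤ C)
    (hmean : ∀ n i, ∫ ω, X n i ω ∂ℙ = μ)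
    (hind : ∀ n, iIndepFun (X n) ℙ) :
    ∀ᵐ ω ∂ℙ, Tendsto (fun n : ℕ => (n : ℝ)⁻¹ * ∑ i, X n i ω) atTop (𝓝 μ) := by
  classical
  set C' : ℝ := C + |μ| with hC'
  have hC'0 : 0 ≤ C' := add_nonneg hC (abs_nonneg μ)
  -- centered variables
  set Z : (n : ℕ) → Fin n → Ω → ℝ := fun n i ω => X n i ω - μ with hZ
  have hZmeas : ∀ n (i : Fin n), Measurable (Z n i) := fun n i => (hmeas n i).sub_const μ
  have hZb : ∀ n (i : Fin n) ω, |Z n i ω| ≤ C' := fun n i ω =>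
    le_trans (abs_sub (X n i ω) μ) (add_le_add (hb n i ω) le_rfl)
  have hZmean : ∀ n (i : Fin n), ∫ ω, Z n i ω ∂ℙ = 0 := by
    intro n i
    rw [hZ]
    simp only
    rw [integral_sub (myintegrable (hmeas n i) (hb n i)) (integrable_const μ)]
    simp [hmean n i]
  have hZind : ∀ n, iIndepFun (Z n) ℙ := fun n =>
    (hind n).comp (fun _ x => x - μ) (fun _ => measurable_id.sub_const μ)
  have h4 : ∀ n : ℕ, ∫ ω, (∑ i, Z n i ω) ^ 4 ∂ℙ ≤ 16 * C' ^ 4 * n ^ 2 := fun n =>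
    fourth_moment (Z n) (hZmeas n) hC'0 (hZb n) (hZind n) (hZmean n)
  -- events
  have key : ∀ ε : ℝ, 0 < ε →
      ∀ᵐ ω ∂ℙ, ∀ᶠ n : ℕ in atTop, |(n : ℝ)⁻¹ * ∑ i, Z n i ω| < ε := by
    intro ε hε
    set E : ℕ → Set Ω := fun n => {ω | ε ≤ |(n : ℝ)⁻¹ * ∑ i, Z n i ω|} with hE
    have hbound : ∀ n : ℕ, ℙ (E n) ≤ ENNReal.ofReal (16 * C' ^ 4 / ε ^ 4 / (n : ℝ) ^ 2) := by
      intro n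
      rcases Nat.eq_zero_or_pos n with hn | hn
      · subst hn
        have : E 0 = ∅ := by
          ext ω
          simp [hE, not_le, hε]
        simp [this]
      · have hnR : (0:ℝ) < n := by exact_mod_cast hn
        set f : Ω → ℝ := fun ω => (∑ i, Z n i ω) ^ 4 with hf
        have hfnn : 0 ≤ᵐ[ℙ] f := ae_of_all _ fun ω => by positivity
        have hfmeas : Measurable f := (Finset.measurable_sum _ fun i _ => hZmeas n i).pow_const 4
        have hfb : ∀ ω, |f ω| ≤ ((n : ℝ) * C') ^ 4 := by
          intro ω
          rw [hf]
          simp only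
          rw [abs_pow]
          apply pow_le_pow_left₀ (abs_nonneg _)
          calc |∑ i, Z n i ω| ≤ ∑ i, |Z n i ω| := Finset.abs_sum_le_sum_abs _ _
            _ ≤ ∑ _i : Fin n, C' := Finset.sum_le_sum fun i _ => hZb n i ω
            _ = (n : ℝ) * C' := by simp [Finset.sum_const, mul_comm]
        have hfint : Integrable f ℙ := myintegrable hfmeas hfb
        have hsubset : E n ⊆ {ω | (ε * n) ^ 4 ≤ f ω} := by
          intro ω hω
          simp only [hE, Set.mem_setOf_eq] at hω ⊢
          have h1 : ε * n ≤ |∑ i, Z n i ω| := by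
            rw [abs_mul, abs_inv, abs_of_nonneg (Nat.cast_nonneg n)] at hω
            rw [← le_div_iff₀ hnR]
            rwa [inv_mul_eq_div] at hω
          calc (ε * n) ^ 4 ≤ |∑ i, Z n i ω| ^ 4 :=
                pow_le_pow_left₀ (by positivity) h1 4
            _ = f ω := by
                rw [hf]
                simp only
                rw [pow_abs, abs_of_nonneg (by positivity)]
        have hmarkov := mul_meas_ge_le_integral_of_nonneg hfnn hfint ((ε * n) ^ 4)
        have hεn : (0:ℝ) < (ε * n) ^ 4 := by positivity
        have h2 := le_trans hmarkov (h4 n)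
        have hMle : (ℙ {x | (ε * n) ^ 4 ≤ f x}).toReal ≤ 16 * C' ^ 4 / ε ^ 4 / (n : ℝ) ^ 2 := by
          have h3 : (ℙ {x | (ε * n) ^ 4 ≤ f x}).toReal ≤ (16 * C' ^ 4 * (n:ℝ) ^ 2) / (ε * n) ^ 4 :=
            (le_div_iff₀ hεn).mpr (by rw [measureReal_def] at h2; linarith)
          have h5 : (16 * C' ^ 4 * (n:ℝ) ^ 2) / (ε * n) ^ 4 = 16 * C' ^ 4 / ε ^ 4 / (n : ℝ) ^ 2 := by
            field_simp
          linarith [h3, h5.le, h5.ge]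
        calc ℙ (E n) ≤ ℙ {x | (ε * n) ^ 4 ≤ f x} := measure_mono hsubset
          _ = ENNReal.ofReal ((ℙ {x | (ε * n) ^ 4 ≤ f x}).toReal) :=
              (ENNReal.ofReal_toReal (measure_ne_top _ _)).symm
          _ ≤ ENNReal.ofReal (16 * C' ^ 4 / ε ^ 4 / (n : ℝ) ^ 2) := ENNReal.ofReal_le_ofReal hMle
    have hsummable : Summable (fun n : ℕ => 16 * C' ^ 4 / ε ^ 4 / (n : ℝ) ^ 2) := by
      have h1 : Summable (fun n : ℕ => ((n : ℝ) ^ 2)⁻¹) :=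
        Real.summable_nat_pow_inv.mpr (by norm_num)
      have := h1.mul_left (16 * C' ^ 4 / ε ^ 4)
      simpa [div_eq_mul_inv] using this
    have hne : (∑' n, ℙ (E n)) ≠ ⊤ := by
      have hle := ENNReal.tsum_le_tsum hbound
      have heq : (∑' n : ℕ, ENNReal.ofReal (16 * C' ^ 4 / ε ^ 4 / (n : ℝ) ^ 2)) =
          ENNReal.ofReal (∑' n : ℕ, 16 * C' ^ 4 / ε ^ 4 / (n : ℝ) ^ 2) :=
        (ENNReal.ofReal_tsum_of_nonneg (fun n => by positivity) hsummable).symm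
      exact ne_top_of_le_ne_top (by rw [heq]; exact ENNReal.ofReal_ne_top) hle
    filter_upwards [ae_eventually_notMem hne] with ω hω
    filter_upwards [hω] with n hn
    simpa [hE, not_le] using hn
  have hae := ae_all_iff.mpr (fun k : ℕ => key (((k : ℝ) + 1))⁻¹ (by positivity))
  filter_upwards [hae] with ω hω
  have hZtend : Tendsto (fun n : ℕ => (n : ℝ)⁻¹ * ∑ i, Z n i ω) atTop (𝓝 0) := by
    rw [NormedAddCommGroup.tendsto_nhds_zero]
    intro ε hε
    obtain ⟨k, hk⟩ := exists_nat_one_div_lt hε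
    filter_upwards [hω k] with n hn
    rw [Real.norm_eq_abs]
    calc |(n : ℝ)⁻¹ * ∑ i, Z n i ω| < ((k : ℝ) + 1)⁻¹ := hn
      _ = 1 / ((k : ℝ) + 1) := (one_div _).symm
      _ < ε := hk
  have heq : ∀ᶠ n : ℕ in atTop,
      (n : ℝ)⁻¹ * ∑ i, Z n i ω + μ = (n : ℝ)⁻¹ * ∑ i, X n i ω := by
    filter_upwards [eventually_ge_atTop 1] with n hn
    have hnR : ((n : ℝ)) ≠ 0 := by
      have : (0:ℝ) < n := by exact_mod_cast hn
      linarith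
    rw [hZ]
    simp only
    rw [Finset.sum_sub_distrib, Finset.sum_const, Finset.card_univ, Fintype.card_fin]
    field_simp
    ring
  have := (hZtend.add_const μ).congr' heq
  simpa using this

lemma base_integrals (θ : ℝ) (hθ0 : 0 ≤ θ) (Y U : Ω → ℝ)
    (hY : Measurable Y) (hU : Measurable U)
    (hYv : ∀ ω, Y ω = 1 ∨ Y ω = -1) (hUv : ∀ ω, U ω = 0 ∨ U ω = 1)
    (hy1 : ℙ {ω | Y ω = 1} = 1 / 2)
    (hu1 : ℙ {ω | U ω = 1 ∧ Y ω = -1} = ENNReal.ofReal (θ / 2))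
    (hu0 : ℙ {ω | U ω = 1 ∧ Y ω = 1} = 0) :
    (∫ ω, Y ω ∂ℙ = 0) ∧ (∫ ω, U ω ∂ℙ = θ / 2) ∧ (∫ ω, Y ω * U ω ∂ℙ = -(θ / 2)) := by
  classical
  have hA : MeasurableSet {ω | Y ω = 1} := hY (measurableSet_singleton 1)
  have hB1 : MeasurableSet {ω | U ω = 1 ∧ Y ω = -1} :=
    (hU (measurableSet_singleton 1)).inter (hY (measurableSet_singleton (-1)))
  have hB2 : MeasurableSet {ω | U ω = 1 ∧ Y ω = 1} :=
    (hU (measurableSet_singleton 1)).inter hA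
  have htR1 : (ℙ {ω | Y ω = 1}).toReal = 1 / 2 := by rw [hy1]; simp
  have htR2 : (ℙ {ω | U ω = 1 ∧ Y ω = -1}).toReal = θ / 2 := by
    rw [hu1, ENNReal.toReal_ofReal (by linarith)]
  have htR3 : (ℙ {ω | U ω = 1 ∧ Y ω = 1}).toReal = 0 := by rw [hu0]; simp
  have hIY : ∫ ω, Y ω ∂ℙ = 0 := by
    have hpt : Y = fun ω => 2 * ({ω | Y ω = 1}.indicator (fun _ => (1:ℝ)) ω) - 1 := by
      funext ω
      rcases hYv ω with h | h <;> simp [Set.indicator_apply, h] <;> norm_num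
    rw [hpt]
    beta_reduce
    rw [integral_sub ((integrable_const (1:ℝ)).indicator hA |>.const_mul 2) (integrable_const 1)]
    · rw [MeasureTheory.integral_const_mul, integral_indicator_const (1:ℝ) hA, measureReal_def, htR1]
      simp
  have hIU : ∫ ω, U ω ∂ℙ = θ / 2 := by
    have hpt : U = fun ω => ({ω | U ω = 1 ∧ Y ω = -1}.indicator (fun _ => (1:ℝ)) ω) +
        ({ω | U ω = 1 ∧ Y ω = 1}.indicator (fun _ => (1:ℝ)) ω) := by
      funext ω
      rcases hUv ω with h | h <;> rcases hYv ω with h2 | h2 <;>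
        simp [Set.indicator_apply, h, h2] <;> norm_num
    rw [hpt]
    beta_reduce
    rw [integral_add ((integrable_const (1:ℝ)).indicator hB1)
      ((integrable_const (1:ℝ)).indicator hB2),
      integral_indicator_const (1:ℝ) hB1, integral_indicator_const (1:ℝ) hB2, measureReal_def, measureReal_def, htR2, htR3]
    simp
  have hIYU : ∫ ω, Y ω * U ω ∂ℙ = -(θ / 2) := by
    have hpt : (fun ω => Y ω * U ω) = fun ω => ({ω | U ω = 1 ∧ Y ω = 1}.indicator (fun _ => (1:ℝ)) ω) -
        ({ω | U ω = 1 ∧ Y ω = -1}.indicator (fun _ => (1:ℝ)) ω) := by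
      funext ω
      rcases hUv ω with h | h <;> rcases hYv ω with h2 | h2 <;>
        simp [Set.indicator_apply, h, h2] <;> norm_num
    rw [hpt]
    beta_reduce
    rw [integral_sub ((integrable_const (1:ℝ)).indicator hB2)
      ((integrable_const (1:ℝ)).indicator hB1),
      integral_indicator_const (1:ℝ) hB1, integral_indicator_const (1:ℝ) hB2, measureReal_def, measureReal_def, htR2, htR3]
    simp
  exact ⟨hIY, hIU, hIYU⟩

lemma int_poly (θ : ℝ) (hθ0 : 0 ≤ θ) (Y U : Ω → ℝ)
    (hY : Measurable Y) (hU : Measurable U)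
    (hYv : ∀ ω, Y ω = 1 ∨ Y ω = -1) (hUv : ∀ ω, U ω = 0 ∨ U ω = 1)
    (hy1 : ℙ {ω | Y ω = 1} = 1 / 2)
    (hu1 : ℙ {ω | U ω = 1 ∧ Y ω = -1} = ENNReal.ofReal (θ / 2))
    (hu0 : ℙ {ω | U ω = 1 ∧ Y ω = 1} = 0) (a b c d : ℝ) :
    ∫ ω, (a + b * U ω + c * Y ω + d * (Y ω * U ω)) ∂ℙ
      = a + b * (θ / 2) - d * (θ / 2) := by
  obtain ⟨hIY, hIU, hIYU⟩ := base_integrals θ hθ0 Y U hY hU hYv hUv hy1 hu1 hu0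
  have hYb : ∀ ω, |Y ω| ≤ 1 := fun ω => by rcases hYv ω with h | h <;> simp [h]
  have hUb : ∀ ω, |U ω| ≤ 1 := fun ω => by rcases hUv ω with h | h <;> simp [h]
  have hYUb : ∀ ω, |Y ω * U ω| ≤ 1 := fun ω => by
    rw [abs_mul]
    calc |Y ω| * |U ω| ≤ 1 * 1 := by
          apply mul_le_mul (hYb ω) (hUb ω) (abs_nonneg _) zero_le_one
      _ = 1 := one_mul 1
  have hYint : Integrable Y ℙ := myintegrable hY hYb
  have hUint : Integrable U ℙ := myintegrable hU hUb
  have hYUint : Integrable (fun ω => Y ω * U ω) ℙ := myintegrable (hY.mul hU) hYUb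
  have I2 : Integrable (fun ω => b * U ω) ℙ := hUint.const_mul b
  have I3 : Integrable (fun ω => c * Y ω) ℙ := hYint.const_mul c
  have I4 : Integrable (fun ω => d * (Y ω * U ω)) ℙ := hYUint.const_mul d
  have I12 : Integrable (fun ω => a + b * U ω) ℙ := (integrable_const a).add I2
  have I123 : Integrable (fun ω => a + b * U ω + c * Y ω) ℙ := I12.add I3
  rw [integral_add I123 I4, integral_add I12 I3, integral_add (integrable_const a) I2]
  rw [integral_const_mul, integral_const_mul, integral_const_mul, integral_const,
    hIY, hIU, hIYU]
  simp
  ring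


end Helpers

set_option maxHeartbeats 1000000

/-- in the label-and-indicator model with `θ ∈ (0,1)`, with
`r = u − (θ/2)𝟙` and `w̃ = y + 2r`, almost surely `(1/n)‖w̃‖² → 1 − θ²`, eventually
`‖r‖ > 0`, and `(1/n)(w̃ᵀr)²/‖r‖² → θ(1−θ)²/(2−θ)`. -/
theorem label_indicator_llns_second_order {Ω : Type} [MeasureSpace Ω]
    [IsProbabilityMeasure (ℙ : Measure Ω)]
    (θ : ℝ) (hθ : θ ∈ Set.Ioo (0 : ℝ) 1)
    (y u : (n : ℕ) → Ω → Fin n → ℝ)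
    (hymeas : ∀ n (i : Fin n), Measurable fun ω => y n ω i)
    (humeas : ∀ n (i : Fin n), Measurable fun ω => u n ω i)
    (hyval : ∀ n ω (i : Fin n), y n ω i = 1 ∨ y n ω i = -1)
    (huval : ∀ n ω (i : Fin n), u n ω i = 0 ∨ u n ω i = 1)
    (hy1 : ∀ n (i : Fin n), ℙ {ω | y n ω i = 1} = 1 / 2)
    (hu1 : ∀ n (i : Fin n), ℙ {ω | u n ω i = 1 ∧ y n ω i = -1} = ENNReal.ofReal (θ / 2))
    (hu0 : ∀ n (i : Fin n), ℙ {ω | u n ω i = 1 ∧ y n ω i = 1} = 0)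
    (hyuindep : ∀ n, iIndepFun
      (fun i : Fin n => fun ω => (y n ω i, u n ω i)) ℙ) :
    ∀ᵐ ω ∂ℙ,
      (Tendsto (fun n : ℕ => (n : ℝ)⁻¹ *
          ∑ i, (y n ω i + 2 * (u n ω i - θ / 2)) ^ 2) atTop (𝓝 (1 - θ ^ 2))) ∧
      (∀ᶠ n in atTop, 0 < ∑ i, (u n ω i - θ / 2) ^ 2) ∧
      (Tendsto (fun n : ℕ => (n : ℝ)⁻¹ *
          (∑ i, (y n ω i + 2 * (u n ω i - θ / 2)) * (u n ω i - θ / 2)) ^ 2 /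
            (∑ i, (u n ω i - θ / 2) ^ 2)) atTop
        (𝓝 (θ * (1 - θ) ^ 2 / (2 - θ)))) := by
  obtain ⟨hθ0, hθ1⟩ := hθ
  -- the three coordinate processes
  set X1 : (n : ℕ) → Fin n → Ω → ℝ :=
    fun n i ω => (y n ω i + 2 * (u n ω i - θ / 2)) ^ 2 with hX1
  set X2 : (n : ℕ) → Fin n → Ω → ℝ :=
    fun n i ω => (u n ω i - θ / 2) ^ 2 with hX2
  set X3 : (n : ℕ) → Fin n → Ω → ℝ :=
    fun n i ω => (y n ω i + 2 * (u n ω i - θ / 2)) * (u n ω i - θ / 2) with hX3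
  -- measurability
  have hm1 : ∀ n (i : Fin n), Measurable (X1 n i) := fun n i =>
    ((hymeas n i).add (((humeas n i).sub_const _).const_mul 2)).pow_const 2
  have hm2 : ∀ n (i : Fin n), Measurable (X2 n i) := fun n i =>
    ((humeas n i).sub_const _).pow_const 2
  have hm3 : ∀ n (i : Fin n), Measurable (X3 n i) := fun n i =>
    ((hymeas n i).add (((humeas n i).sub_const _).const_mul 2)).mul
      ((humeas n i).sub_const _)
  -- bounds
  have hb1 : ∀ n (i : Fin n) ω, |X1 n i ω| ≤ 16 := by
    intro n i ω
    rcases hyval n ω i with h | h <;> rcases huval n ω i with h2 | h2 <;>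
      rw [hX1] <;> simp only <;> rw [h, h2, abs_le] <;> constructor <;> nlinarith
  have hb2 : ∀ n (i : Fin n) ω, |X2 n i ω| ≤ 16 := by
    intro n i ω
    rcases huval n ω i with h2 | h2 <;>
      rw [hX2] <;> simp only <;> rw [h2, abs_le] <;> constructor <;> nlinarith
  have hb3 : ∀ n (i : Fin n) ω, |X3 n i ω| ≤ 16 := by
    intro n i ω
    rcases hyval n ω i with h | h <;> rcases huval n ω i with h2 | h2 <;>
      rw [hX3] <;> simp only <;> rw [h, h2, abs_le] <;> constructor <;> nlinarith
  -- independence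
  have hi1 : ∀ n, iIndepFun (fun i => X1 n i) ℙ := fun n =>
    (hyuindep n).comp (fun _ p => (p.1 + 2 * (p.2 - θ / 2)) ^ 2)
      (fun _ => by fun_prop)
  have hi2 : ∀ n, iIndepFun (fun i => X2 n i) ℙ := fun n =>
    (hyuindep n).comp (fun _ p => (p.2 - θ / 2) ^ 2) (fun _ => by fun_prop)
  have hi3 : ∀ n, iIndepFun (fun i => X3 n i) ℙ := fun n =>
    (hyuindep n).comp (fun _ p => (p.1 + 2 * (p.2 - θ / 2)) * (p.2 - θ / 2))
      (fun _ => by fun_prop)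
  -- means
  have hmean1 : ∀ n (i : Fin n), ∫ ω, X1 n i ω ∂ℙ = 1 - θ ^ 2 := by
    intro n i
    have hpt : X1 n i = fun ω => (1 + θ ^ 2) + (4 - 4 * θ) * u n ω i +
        (-(2 * θ)) * y n ω i + 4 * (y n ω i * u n ω i) := by
      funext ω
      rcases hyval n ω i with h | h <;> rcases huval n ω i with h2 | h2 <;>
        rw [hX1] <;> simp only <;> rw [h, h2] <;> ring
    rw [hpt, int_poly θ hθ0.le _ _ (hymeas n i) (humeas n i) (fun ω => hyval n ω i)
      (fun ω => huval n ω i) (hy1 n i) (hu1 n i) (hu0 n i)]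
    ring
  have hmean2 : ∀ n (i : Fin n), ∫ ω, X2 n i ω ∂ℙ = θ / 2 - θ ^ 2 / 4 := by
    intro n i
    have hpt : X2 n i = fun ω => (θ ^ 2 / 4) + (1 - θ) * u n ω i +
        0 * y n ω i + 0 * (y n ω i * u n ω i) := by
      funext ω
      rcases hyval n ω i with h | h <;> rcases huval n ω i with h2 | h2 <;>
        rw [hX2] <;> simp only <;> rw [h, h2] <;> ring
    rw [hpt, int_poly θ hθ0.le _ _ (hymeas n i) (humeas n i) (fun ω => hyval n ω i)
      (fun ω => huval n ω i) (hy1 n i) (hu1 n i) (hu0 n i)]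
    ring
  have hmean3 : ∀ n (i : Fin n), ∫ ω, X3 n i ω ∂ℙ = θ / 2 - θ ^ 2 / 2 := by
    intro n i
    have hpt : X3 n i = fun ω => (θ ^ 2 / 2) + (2 - 2 * θ) * u n ω i +
        (-(θ / 2)) * y n ω i + 1 * (y n ω i * u n ω i) := by
      funext ω
      rcases hyval n ω i with h | h <;> rcases huval n ω i with h2 | h2 <;>
        rw [hX3] <;> simp only <;> rw [h, h2] <;> ring
    rw [hpt, int_poly θ hθ0.le _ _ (hymeas n i) (humeas n i) (fun ω => hyval n ω i)
      (fun ω => huval n ω i) (hy1 n i) (hu1 n i) (hu0 n i)]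
    ring
  -- LLNs
  have lln1 := tri_lln X1 (1 - θ ^ 2) 16 (by norm_num) hm1 hb1 hmean1 hi1
  have lln2 := tri_lln X2 (θ / 2 - θ ^ 2 / 4) 16 (by norm_num) hm2 hb2 hmean2 hi2
  have lln3 := tri_lln X3 (θ / 2 - θ ^ 2 / 2) 16 (by norm_num) hm3 hb3 hmean3 hi3
  filter_upwards [lln1, lln2, lln3] with ω h1 h2 h3
  have hq : (0:ℝ) < θ / 2 - θ ^ 2 / 4 := by nlinarith
  -- eventual positivity of the sum of r²
  have hpos : ∀ᶠ n : ℕ in atTop, 0 < ∑ i, (u n ω i - θ / 2) ^ 2 := by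
    have hev := h2.eventually (eventually_gt_nhds (by linarith :
      (θ / 2 - θ ^ 2 / 4) / 2 < θ / 2 - θ ^ 2 / 4))
    filter_upwards [hev] with n hn
    by_contra hc
    push_neg at hc
    have hinv : (0:ℝ) ≤ (n : ℝ)⁻¹ := by positivity
    nlinarith
  refine ⟨h1, hpos, ?_⟩
  -- the ratio
  have hq' : θ / 2 - θ ^ 2 / 4 ≠ 0 := ne_of_gt hq
  have htendG : Tendsto (fun n : ℕ => ((n : ℝ)⁻¹ * ∑ i, X3 n i ω) ^ 2 /
      ((n : ℝ)⁻¹ * ∑ i, X2 n i ω)) atTop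
      (𝓝 ((θ / 2 - θ ^ 2 / 2) ^ 2 / (θ / 2 - θ ^ 2 / 4))) :=
    (h3.pow 2).div h2 hq'
  have hconst : (θ / 2 - θ ^ 2 / 2) ^ 2 / (θ / 2 - θ ^ 2 / 4)
      = θ * (1 - θ) ^ 2 / (2 - θ) := by
    have h2θ : (2:ℝ) - θ ≠ 0 := by linarith
    rw [div_eq_div_iff hq' h2θ]
    ring
  rw [← hconst]
  apply htendG.congr'
  filter_upwards [eventually_ge_atTop 1, hpos] with n hn hSpos
  have hnR : ((n : ℝ)) ≠ 0 := by
    have : (0:ℝ) < n := by exact_mod_cast hn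
    linarith
  have hS : (∑ i, (u n ω i - θ / 2) ^ 2) ≠ 0 := ne_of_gt hSpos
  rw [hX2, hX3]
  simp only
  set A := ∑ i, (y n ω i + 2 * (u n ω i - θ / 2)) * (u n ω i - θ / 2) with hA
  set B := ∑ i, (u n ω i - θ / 2) ^ 2 with hB
  field_simp
end
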